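/- Let X be a finite set, n = |X| ≥ 2, and let d(i,j) = 1 for all i ≠ j. Then the Lipschitz polytope LIP(X,d) = {x ∈ ℝ^X : Σxᵢ = 0, xᵢ − xⱼ ≤ 1 ∀i,j} is the Minkowski sum Σ_{k∈X} (1/2)·conv{v_k, −v_k} where v_k = ((n−1)/n)𝟙_k − (1/n)𝟙_{X∖{k}}. -/

import Mathlib

open Pointwise

/-- The Lipschitz polytope of a pseudometric `d` on a finite set `X`. -/
def LIP {X : Type*} [Fintype X] (d : X → X → ℝ) : Set (X → ℝ) :=
  {x | (∑ i, x i) = 0 ∧ ∀ i j, x i - x j ≤ d i j}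

lemma half_seg {E : Type*} [AddCommGroup E] [Module ℝ E] (v : E) :
    (1/2 : ℝ) • segment ℝ v (-v) = (fun c : ℝ => c • v) '' Set.Icc (-(1/2) : ℝ) (1/2) := by
  rw [segment_eq_image]
  ext x
  simp only [Set.mem_smul_set, Set.mem_image, Set.mem_Icc]
  constructor
  · rintro ⟨y, ⟨θ, ⟨h0, h1⟩, rfl⟩, rfl⟩
    exact ⟨1/2 - θ, ⟨by linarith, by linarith⟩, by module⟩
  · rintro ⟨c, ⟨h0, h1⟩, rfl⟩
    exact ⟨_, ⟨1/2 - c, ⟨by linarith, by linarith⟩, rfl⟩, by module⟩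

theorem lip_unit_metric_zonotope {X : Type*} [Fintype X] [DecidableEq X]
    (hcard : 2 ≤ Fintype.card X)
    (v : X → X → ℝ)
    (hv : ∀ k i, v k i = if i = k then ((Fintype.card X : ℝ) - 1) / (Fintype.card X)
      else -(1 / (Fintype.card X : ℝ))) :
    LIP (fun i j => if i = j then (0:ℝ) else 1) =
      ∑ k : X, (1/2 : ℝ) • segment ℝ (v k) (-(v k)) := by
  have hX : Nonempty X := Fintype.card_pos_iff.mp (by omega)
  set n : ℝ := (Fintype.card X : ℝ) with hn
  have hn0 : (0:ℝ) < n := by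
    have : (2:ℝ) ≤ n := by rw [hn]; exact_mod_cast hcard
    linarith
  have hne : n ≠ 0 := ne_of_gt hn0
  have hv' : ∀ k i, v k i = (if i = k then (1:ℝ) else 0) - 1/n := by
    intro k i
    rw [hv]
    split_ifs with h
    · field_simp
    · ring
  have key : ∀ (t : X → ℝ) (i : X),
      (∑ k, t k • v k) i = t i - (∑ k, t k) / n := by
    intro t i
    rw [Finset.sum_apply]
    have h1 : ∀ k, (t k • v k) i = (if i = k then t k else 0) - t k / n := by
      intro k
      rw [Pi.smul_apply, smul_eq_mul, hv' k i]
      split_ifs <;> ring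
    rw [Finset.sum_congr rfl fun k _ => h1 k, Finset.sum_sub_distrib,
      Finset.sum_ite_eq, if_pos (Finset.mem_univ i), ← Finset.sum_div]
  have hrw : (∑ k : X, (1/2 : ℝ) • segment ℝ (v k) (-(v k))) =
      ∑ k : X, (fun c : ℝ => c • v k) '' Set.Icc (-(1/2) : ℝ) (1/2) :=
    Finset.sum_congr rfl fun k _ => half_seg (v k)
  ext x
  rw [hrw, Set.mem_fintype_sum]
  simp only [LIP, Set.mem_setOf_eq]
  constructor
  · rintro ⟨hsum, hineq⟩
    obtain ⟨j, -, hj⟩ := Finset.exists_min_image Finset.univ x Finset.univ_nonempty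
    have hle : ∀ i, x i - x j ≤ 1 := by
      intro i
      have := hineq i j
      split_ifs at this <;> linarith
    refine ⟨fun k => (x k - x j - 1/2) • v k, fun k => ⟨x k - x j - 1/2,
      ⟨by have := hj k (Finset.mem_univ k); linarith, by have := hle k; linarith⟩, rfl⟩, ?_⟩
    funext i
    rw [key]
    have hsumt : (∑ k, (x k - x j - 1/2)) = -(n * (x j + 1/2)) := by
      simp only [Finset.sum_sub_distrib, hsum, Finset.sum_const, Finset.card_univ,
        nsmul_eq_mul, ← hn]
      ring
    rw [hsumt]
    field_simp
    ring
  · rintro ⟨g, hg, rfl⟩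
    choose c hc hgc using fun k => hg k
    have hgeq : (∑ k, g k) = ∑ k, c k • v k := by
      exact Finset.sum_congr rfl fun k _ => (hgc k).symm
    rw [hgeq]
    constructor
    · rw [Finset.sum_congr rfl fun i (_ : i ∈ Finset.univ) => key c i,
        Finset.sum_sub_distrib, Finset.sum_const, Finset.card_univ, nsmul_eq_mul, ← hn]
      field_simp
      ring
    · intro i j
      rw [key, key]
      have hci := hc i
      have hcj := hc j
      simp only [Set.mem_Icc] at hci hcj
      split_ifs with h
      · subst h; simp
      · linarith [hci.1, hci.2, hcj.1, hcj.2]
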